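/- Geometric-exponent inequality (LP duality bound): let β ≥ 2 and n ≥ 2 be integers and let 0 = e_1 < e_2 < … < e_n be integers. With σ_k = Σ_{i=1}^k β^{e_i} and v_k = σ_k/σ_n, one has Σ_{k=1}^{n−1} v_k ≤ 1/(β−1) − n/(β^n − 1), with equality when e_k = k − 1. -/

import Mathlib

noncomputable section

/-- The set of positive normal floating point numbers with exponent `e`. -/
def Eset (β μ : ℕ) (e : ℤ) : Set ℝ :=
  {x | ∃ r : ℕ, r < (β - 1) * β ^ μ ∧ x = (β : ℝ) ^ e * ((β : ℝ) ^ μ + r)}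

/-- Perfect floating point system: all integer exponents. -/
def PerfectF (β μ : ℕ) : Set ℝ :=
  {x | x = 0 ∨ ∃ e : ℤ, x ∈ Eset β μ e ∨ -x ∈ Eset β μ e}

/-- MPFR system: exponents bounded below by `emin`, no subnormals. -/
def MPFRF (β μ : ℕ) (emin : ℤ) : Set ℝ :=
  {x | x = 0 ∨ ∃ e : ℤ, emin ≤ e ∧ (x ∈ Eset β μ e ∨ -x ∈ Eset β μ e)}

/-- Subnormal numbers (both signs) for minimal exponent `emin`. -/
def SubN (β μ : ℕ) (emin : ℤ) : Set ℝ :=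
  {x | ∃ r : ℕ, 1 ≤ r ∧ r < β ^ μ ∧ (x = (β : ℝ) ^ emin * r ∨ x = -((β : ℝ) ^ emin * r))}

/-- IEEE system: MPFR system augmented with subnormal numbers. -/
def IEEEF (β μ : ℕ) (emin : ℤ) : Set ℝ := MPFRF β μ emin ∪ SubN β μ emin

/-- `fl` rounds to nearest in `F`. -/
def RTN (F : Set ℝ) (fl : ℝ → ℝ) : Prop :=
  ∀ z : ℝ, fl z ∈ F ∧ ∀ x ∈ F, |fl z - z| ≤ |x - z|

/-- Recursively rounded sum: `rsum fl y 0 = y 0`,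
`rsum fl y (k+1) = fl (k+1) (rsum fl y k + y (k+1))`. -/
def rsum (fl : ℕ → ℝ → ℝ) (y : ℕ → ℝ) : ℕ → ℝ
  | 0 => y 0
  | k + 1 => fl (k + 1) (rsum fl y k + y (k + 1))

/-- Ties are broken downward. -/
def BreaksTiesDown (F : Set ℝ) (fl : ℝ → ℝ) : Prop :=
  ∀ z : ℝ, ∀ x ∈ F, |x - z| = |fl z - z| → fl z ≤ x

/-- Ties are broken upward. -/
def BreaksTiesUp (F : Set ℝ) (fl : ℝ → ℝ) : Prop :=
  ∀ z : ℝ, ∀ x ∈ F, |x - z| = |fl z - z| → x ≤ fl z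

private lemma geomShift (b : ℝ) (hb1 : b ≠ 1) (hb0 : b ≠ 0) (k n : ℕ) (c : ℤ) :
    ∑ i ∈ Finset.Icc (k+1) n, b ^ (c + (i:ℤ) - (k+1)) = b ^ c * ((b ^ (n-k) - 1) / (b - 1)) := by
  rw [show Finset.Icc (k+1) n = Finset.Ico (k+1) (n+1) from by rw [Finset.Ico_add_one_right_eq_Icc],
    Finset.sum_Ico_eq_sum_range, show n + 1 - (k+1) = n - k by omega]
  have h : ∀ i ∈ Finset.range (n-k), b ^ (c + ((k+1+i:ℕ):ℤ) - ((k:ℤ)+1)) = b ^ c * b ^ i := by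
    intro i _
    rw [show c + ((k+1+i:ℕ):ℤ) - ((k:ℤ)+1) = c + (i:ℤ) by push_cast; ring,
      zpow_add₀ hb0, zpow_natCast]
  rw [Finset.sum_congr rfl h, ← Finset.mul_sum, geom_sum_eq hb1]

private lemma geomShift1 (b : ℝ) (hb1 : b ≠ 1) (hb0 : b ≠ 0) (n : ℕ) (c : ℤ) :
    ∑ i ∈ Finset.Icc 1 n, b ^ (c + (i:ℤ) - 1) = b ^ c * ((b ^ n - 1) / (b - 1)) := by
  have := geomShift b hb1 hb0 0 n c
  simpa using this

private lemma sumClosed (b : ℝ) (hb : 1 < b) (n : ℕ) (hn : 2 ≤ n) :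
    ∑ k ∈ Finset.Icc 1 (n-1), (b ^ k - 1) / (b ^ n - 1)
      = 1 / (b - 1) - (n : ℝ) / (b ^ n - 1) := by
  have hb0 : b ≠ 0 := by linarith
  have hb1 : b ≠ 1 := ne_of_gt hb
  have hbn : (1:ℝ) < b ^ n := one_lt_pow₀ hb (by omega)
  have hgeom : ∑ k ∈ Finset.Icc 1 (n-1), b ^ k = b * ((b ^ (n-1) - 1) / (b - 1)) := by
    have h := geomShift1 b hb1 hb0 (n-1) 1
    rw [zpow_one] at h
    rw [← h]
    exact Finset.sum_congr rfl fun i hi => by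
      rw [show (1:ℤ) + (i:ℤ) - 1 = (i:ℤ) by ring, zpow_natCast]
  rw [← Finset.sum_div, Finset.sum_sub_distrib, Finset.sum_const, Nat.card_Icc, hgeom]
  have hcard : (n - 1 + 1 - 1) = n - 1 := by omega
  rw [hcard]
  have hpow : b * b ^ (n-1) = b ^ n := by
    rw [← pow_succ']
    congr 1
    omega
  have hc : ((n - 1 : ℕ) : ℝ) = (n : ℝ) - 1 := by
    have : (1:ℕ) ≤ n := by omega
    push_cast [this]
    ring
  rw [nsmul_eq_mul, hc]
  have h1 : b - 1 ≠ 0 := by linarith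
  have h2 : b ^ n - 1 ≠ 0 := by linarith
  field_simp
  nlinarith [hpow]

open Finset in
theorem stmt18 (β n : ℕ) (hβ : 2 ≤ β) (hn : 2 ≤ n)
    (e : ℕ → ℤ) (he1 : e 1 = 0) (hmono : ∀ i, 1 ≤ i → i < n → e i < e (i + 1)) :
    (∑ k ∈ Finset.Icc 1 (n - 1),
        (∑ i ∈ Finset.Icc 1 k, (β : ℝ) ^ (e i)) / (∑ i ∈ Finset.Icc 1 n, (β : ℝ) ^ (e i)))
      ≤ 1 / ((β : ℝ) - 1) - (n : ℝ) / ((β : ℝ) ^ n - 1) ∧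
    ((∀ k, 1 ≤ k → k ≤ n → e k = (k : ℤ) - 1) →
      (∑ k ∈ Finset.Icc 1 (n - 1),
        (∑ i ∈ Finset.Icc 1 k, (β : ℝ) ^ (e i)) / (∑ i ∈ Finset.Icc 1 n, (β : ℝ) ^ (e i)))
        = 1 / ((β : ℝ) - 1) - (n : ℝ) / ((β : ℝ) ^ n - 1)) := by
  set b : ℝ := (β : ℝ) with hbdef
  have hb2 : (2:ℝ) ≤ b := by rw [hbdef]; exact_mod_cast hβ
  have hb : (1:ℝ) < b := by linarith
  have hb0 : (0:ℝ) < b := by linarith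
  have hbne : b ≠ 0 := ne_of_gt hb0
  have hbne1 : b ≠ 1 := ne_of_gt hb
  have hbn1 : (1:ℝ) < b ^ n := one_lt_pow₀ hb (by omega)
  -- S k positive
  have hSpos : ∀ k : ℕ, 1 ≤ k → 0 < ∑ i ∈ Icc 1 k, b ^ (e i) := fun k hk =>
    Finset.sum_pos (fun i _ => zpow_pos hb0 _) (Finset.nonempty_Icc.mpr hk)
  -- key monotonicity
  have key : ∀ i, 1 ≤ i → ∀ j, i ≤ j → j ≤ n → (j:ℤ) - (i:ℤ) ≤ e j - e i := by
    intro i hi j hij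
    induction j, hij using Nat.le_induction with
    | base => intro _; simp
    | succ j hij ih =>
      intro hjn
      have h1 : e j < e (j+1) := hmono j (le_trans hi hij) (by omega)
      have h2 := ih (by omega)
      push_cast
      omega
  -- pointwise bound
  have ptwise : ∀ k ∈ Icc 1 (n-1),
      (∑ i ∈ Icc 1 k, b ^ (e i)) / (∑ i ∈ Icc 1 n, b ^ (e i))
        ≤ (b ^ k - 1) / (b ^ n - 1) := by
    intro k hk
    rw [Finset.mem_Icc] at hk
    obtain ⟨hk1, hk2⟩ := hk
    have hkn : k + 1 ≤ n := by omega
    set a : ℤ := e (k+1) with ha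
    set S : ℝ := ∑ i ∈ Icc 1 k, b ^ (e i) with hS
    set T : ℝ := ∑ i ∈ Icc (k+1) n, b ^ (e i) with hT
    have hsplit : ∑ i ∈ Icc 1 n, b ^ (e i) = S + T := by
      rw [hS, hT, show Finset.Icc 1 k = Finset.Ioc 0 k from rfl,
        show Finset.Icc (k+1) n = Finset.Ioc k n from by rw [← Finset.Icc_add_one_left_eq_Ioc],
        Finset.sum_Ioc_consecutive _ (by omega) (by omega)]
      rfl
    -- upper bound on S
    have hSub : S ≤ b ^ (a - k) * ((b ^ k - 1) / (b - 1)) := by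
      rw [← geomShift1 b hbne1 hbne k (a - k), hS]
      refine Finset.sum_le_sum fun i hi => ?_
      rw [Finset.mem_Icc] at hi
      refine zpow_le_zpow_right₀ (le_of_lt hb) ?_
      have := key i hi.1 (k+1) (by omega) hkn
      omega
    -- lower bound on T
    have hTlb : b ^ a * ((b ^ (n-k) - 1) / (b - 1)) ≤ T := by
      rw [← geomShift b hbne1 hbne k n a, hT]
      refine Finset.sum_le_sum fun i hi => ?_
      rw [Finset.mem_Icc] at hi
      refine zpow_le_zpow_right₀ (le_of_lt hb) ?_
      have := key (k+1) (by omega) i hi.1 hi.2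
      omega
    -- the two bounds match up
    have hmatch : b ^ (a - k) * ((b ^ k - 1) / (b - 1)) * (b ^ n - b ^ k)
        = (b ^ k - 1) * (b ^ a * ((b ^ (n-k) - 1) / (b - 1))) := by
      have e1 : b ^ (a - (k:ℤ)) * b ^ n = b ^ (a - k + n) := by
        rw [← zpow_natCast b n, ← zpow_add₀ hbne]
      have e2 : b ^ (a - (k:ℤ)) * b ^ k = b ^ a := by
        rw [← zpow_natCast b k, ← zpow_add₀ hbne]
        congr 1; ring
      have e3 : b ^ a * b ^ (n - k) = b ^ (a - k + n) := by
        rw [← zpow_natCast b (n-k), ← zpow_add₀ hbne]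
        congr 1
        have : ((n - k : ℕ) : ℤ) = (n : ℤ) - k := by omega
        rw [this]; ring
      linear_combination (b ^ k - 1) / (b - 1) * (e1 - e2 - e3)
    have hSp : 0 < S := hSpos k hk1
    have hTp : 0 < T := Finset.sum_pos (fun i _ => zpow_pos hb0 _)
      (Finset.nonempty_Icc.mpr hkn)
    have hbk1 : (1:ℝ) ≤ b ^ k := one_le_pow₀ (le_of_lt hb)
    have hbkn : b ^ k ≤ b ^ n := pow_le_pow_right₀ (le_of_lt hb) (by omega)
    rw [hsplit, div_le_div_iff₀ (by linarith) (by linarith)]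
    have step1 : S * (b ^ n - b ^ k) ≤ b ^ (a - k) * ((b ^ k - 1) / (b - 1)) * (b ^ n - b ^ k) :=
      mul_le_mul_of_nonneg_right hSub (by linarith)
    have step2 : (b ^ k - 1) * (b ^ a * ((b ^ (n-k) - 1) / (b - 1))) ≤ (b ^ k - 1) * T :=
      mul_le_mul_of_nonneg_left hTlb (by linarith)
    nlinarith [step1, step2, hmatch]
  constructor
  · calc (∑ k ∈ Icc 1 (n-1), (∑ i ∈ Icc 1 k, b ^ (e i)) / (∑ i ∈ Icc 1 n, b ^ (e i)))
        ≤ ∑ k ∈ Icc 1 (n-1), (b ^ k - 1) / (b ^ n - 1) := Finset.sum_le_sum ptwise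
      _ = 1 / (b - 1) - (n : ℝ) / (b ^ n - 1) := sumClosed b hb n hn
  · intro heq
    have hSk : ∀ k : ℕ, k ≤ n → ∑ i ∈ Icc 1 k, b ^ (e i) = (b ^ k - 1) / (b - 1) := by
      intro k hkn
      have h1 : ∑ i ∈ Icc 1 k, b ^ (e i) = ∑ i ∈ Icc 1 k, b ^ ((0:ℤ) + (i:ℤ) - 1) := by
        refine Finset.sum_congr rfl fun i hi => ?_
        rw [Finset.mem_Icc] at hi
        rw [heq i hi.1 (le_trans hi.2 hkn)]
        congr 1; ring
      rw [h1, geomShift1 b hbne1 hbne k 0, zpow_zero, one_mul]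
    have hfin : ∀ k ∈ Icc 1 (n-1),
        (∑ i ∈ Icc 1 k, b ^ (e i)) / (∑ i ∈ Icc 1 n, b ^ (e i))
          = (b ^ k - 1) / (b ^ n - 1) := by
      intro k hk
      rw [Finset.mem_Icc] at hk
      rw [hSk k (by omega), hSk n le_rfl]
      rw [div_div_div_cancel_right₀]
      exact ne_of_gt (by linarith)
    rw [Finset.sum_congr rfl hfin, sumClosed b hb n hn]
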